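/- Fix a real τ with 0 < τ < 1. With α = 1, I_d(t) = ∫_1^d k^{−1}(1 − k^{−1})^t dk and H_{d,1} = Σ_{k=1}^d k^{−1}, one has lim_{d→∞} I_d(d^τ) / H_{d,1} = 1 − τ. -/

import Mathlib

open Filter MeasureTheory intervalIntegral

noncomputable def zf (t : ℝ) : ℝ → ℝ := fun k => k ^ (-1 : ℝ) * (1 - k ^ (-1 : ℝ)) ^ t

lemma zf_contOn (t : ℝ) (ht : 0 ≤ t) {a b : ℝ} (ha : 0 < a) (hab : a ≤ b) :
    ContinuousOn (zf t) (Set.uIcc a b) := by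
  rw [Set.uIcc_of_le hab]
  have h1 : ContinuousOn (fun k : ℝ => k ^ (-1 : ℝ)) (Set.Icc a b) :=
    continuousOn_id.rpow_const fun k hk => Or.inl (ne_of_gt (lt_of_lt_of_le ha hk.1))
  exact h1.mul ((continuousOn_const.sub h1).rpow_const fun k _ => Or.inr ht)

lemma zf_intble (t : ℝ) (ht : 0 ≤ t) {a b : ℝ} (ha : 0 < a) (hab : a ≤ b) :
    IntervalIntegrable (zf t) volume a b :=
  (zf_contOn t ht ha hab).intervalIntegrable

lemma zf_nonneg (t : ℝ) {k : ℝ} (hk : 1 ≤ k) : 0 ≤ zf t k := by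
  have h0 : (0:ℝ) < k := lt_of_lt_of_le one_pos hk
  have : k ^ (-1:ℝ) ≤ 1 := by
    rw [Real.rpow_neg_one]
    exact inv_le_one_of_one_le₀ hk
  exact mul_nonneg (Real.rpow_nonneg h0.le _) (Real.rpow_nonneg (by linarith) _)

-- log log d / log d → 0 over ℕ
lemma loglog_div_log : Tendsto (fun d : ℕ => Real.log (Real.log d) / Real.log d) atTop (nhds 0) := by
  have h : Tendsto (fun d : ℕ => Real.log d) atTop atTop :=
    Real.tendsto_log_atTop.comp tendsto_natCast_atTop_atTop
  exact (Real.isLittleO_log_id_atTop.comp_tendsto h).tendsto_div_nhds_zero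

lemma harmonic_bounds (d : ℕ) (hd : 1 ≤ d) :
    Real.log d ≤ (∑ k ∈ Finset.Icc 1 d, (k : ℝ) ^ (-1 : ℝ)) ∧
    (∑ k ∈ Finset.Icc 1 d, (k : ℝ) ^ (-1 : ℝ)) ≤ 1 + Real.log d := by
  have he : (∑ k ∈ Finset.Icc 1 d, (k : ℝ) ^ (-1 : ℝ)) = (harmonic d : ℝ) := by
    rw [harmonic_eq_sum_Icc]
    push_cast
    refine Finset.sum_congr rfl fun k _ => ?_
    rw [Real.rpow_neg_one]
  constructor
  · rw [he]
    refine le_trans ?_ (log_add_one_le_harmonic d)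
    exact Real.log_le_log (by exact_mod_cast hd) (by push_cast; linarith)
  · rw [he]; exact harmonic_le_one_add_log d

lemma inv_intble {c a b : ℝ} (ha : 0 < a) (hab : a ≤ b) :
    IntervalIntegrable (fun k : ℝ => c * k⁻¹) volume a b := by
  refine IntervalIntegrable.const_mul ?_ c
  exact intervalIntegrable_inv (fun x hx => ne_of_gt (lt_of_lt_of_le ha ((Set.uIcc_of_le hab ▸ hx).1)))
    continuousOn_id

lemma integral_cinv {c a b : ℝ} (ha : 0 < a) (hab : a ≤ b) :
    ∫ k in a..b, c * k⁻¹ = c * (Real.log b - Real.log a) := by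
  rw [intervalIntegral.integral_const_mul, integral_inv (by rw [Set.uIcc_of_le hab]; intro h; exact absurd h.1 (by linarith)),
    Real.log_div (by linarith) (by linarith)]

lemma zf_le_on {t k : ℝ} (ht : 0 ≤ t) (hk : 1 ≤ k) {B : ℝ} (hkB : k ≤ B) :
    zf t k ≤ Real.exp (-(t / B)) * k⁻¹ := by
  have hk0 : (0:ℝ) < k := by linarith
  have h1 : k ^ (-1:ℝ) = k⁻¹ := Real.rpow_neg_one k
  have hinv : k⁻¹ ≤ 1 := inv_le_one_of_one_le₀ hk
  have hb : (1 - k⁻¹ : ℝ) ≤ Real.exp (-k⁻¹) := by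
    have := Real.add_one_le_exp (-k⁻¹); linarith
  have h2 : (1 - k⁻¹ : ℝ) ^ t ≤ Real.exp (-k⁻¹) ^ t :=
    Real.rpow_le_rpow (by linarith) hb ht
  have h3 : Real.exp (-k⁻¹) ^ t = Real.exp (-(t/k)) := by
    rw [← Real.exp_mul]; ring_nf
  have h4 : Real.exp (-(t/k)) ≤ Real.exp (-(t/B)) := by
    apply Real.exp_le_exp.2
    have : t / B ≤ t / k := div_le_div_of_nonneg_left ht hk0 hkB
    linarith
  calc zf t k = (1 - k⁻¹) ^ t * k⁻¹ := by rw [zf, h1]; ring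
    _ ≤ Real.exp (-(t/B)) * k⁻¹ := by
        apply mul_le_mul_of_nonneg_right _ (inv_nonneg.2 hk0.le)
        exact le_trans h2 (le_of_eq_of_le h3 h4)

lemma zf_upper (x B t : ℝ) (hB1 : 1 ≤ B) (hBx : B ≤ x) (ht : 0 ≤ t) :
    ∫ k in (1:ℝ)..x, zf t k ≤
      Real.exp (-(t / B)) * Real.log B + (Real.log x - Real.log B) := by
  have h1x : (1:ℝ) ≤ x := le_trans hB1 hBx
  rw [← integral_add_adjacent_intervals (zf_intble t ht one_pos hB1) (zf_intble t ht (by linarith) hBx)]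
  have c1 : ∫ k in (1:ℝ)..B, zf t k ≤ Real.exp (-(t/B)) * Real.log B := by
    calc ∫ k in (1:ℝ)..B, zf t k ≤ ∫ k in (1:ℝ)..B, Real.exp (-(t/B)) * k⁻¹ := by
          apply integral_mono_on hB1 (zf_intble t ht one_pos hB1) (inv_intble one_pos hB1)
          exact fun k hk => zf_le_on ht hk.1 hk.2
      _ = Real.exp (-(t/B)) * (Real.log B - Real.log 1) := integral_cinv one_pos hB1
      _ = Real.exp (-(t/B)) * Real.log B := by rw [Real.log_one, sub_zero]
  have c2 : ∫ k in B..x, zf t k ≤ Real.log x - Real.log B := by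
    calc ∫ k in B..x, zf t k ≤ ∫ k in B..x, (1:ℝ) * k⁻¹ := by
          apply integral_mono_on hBx (zf_intble t ht (by linarith) hBx) (inv_intble (by linarith) hBx)
          intro k hk
          have hk1 : (1:ℝ) ≤ k := le_trans hB1 hk.1
          have hk0 : (0:ℝ) < k := by linarith
          have h1 : k ^ (-1:ℝ) = k⁻¹ := Real.rpow_neg_one k
          have : (1 - k⁻¹ : ℝ) ^ t ≤ 1 :=
            Real.rpow_le_one (by simp [inv_le_one_of_one_le₀ hk1]) (by simp [inv_nonneg.2 hk0.le]) ht
          calc zf t k = (1 - k⁻¹) ^ t * k⁻¹ := by rw [zf, h1]; ring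
            _ ≤ 1 * k⁻¹ := mul_le_mul_of_nonneg_right this (inv_nonneg.2 hk0.le)
      _ = 1 * (Real.log x - Real.log B) := integral_cinv (by linarith) hBx
      _ = _ := one_mul _
  linarith

lemma zf_lower (x A t : ℝ) (hA1 : 1 ≤ A) (hAx : A ≤ x) (ht : 1 ≤ t) :
    (1 - t / A) * (Real.log x - Real.log A) ≤ ∫ k in (1:ℝ)..x, zf t k := by
  have ht0 : (0:ℝ) ≤ t := by linarith
  have hA0 : (0:ℝ) < A := by linarith
  rw [← integral_add_adjacent_intervals (zf_intble t ht0 one_pos hA1) (zf_intble t ht0 hA0 hAx)]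
  have c1 : (0:ℝ) ≤ ∫ k in (1:ℝ)..A, zf t k :=
    integral_nonneg hA1 fun k hk => zf_nonneg t hk.1
  have c2 : (1 - t / A) * (Real.log x - Real.log A) ≤ ∫ k in A..x, zf t k := by
    calc (1 - t / A) * (Real.log x - Real.log A) = ∫ k in A..x, (1 - t/A) * k⁻¹ :=
          (integral_cinv hA0 hAx).symm
      _ ≤ ∫ k in A..x, zf t k := by
          apply integral_mono_on hAx (inv_intble hA0 hAx) (zf_intble t ht0 hA0 hAx)
          intro k hk
          have hkA : A ≤ k := hk.1
          have hk0 : (0:ℝ) < k := by linarith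
          have h1 : k ^ (-1:ℝ) = k⁻¹ := Real.rpow_neg_one k
          have hAinv : A⁻¹ ≤ 1 := inv_le_one_of_one_le₀ hA1
          have hbern : 1 - t / A ≤ (1 - A⁻¹) ^ t := by
            have := one_add_mul_self_le_rpow_one_add (s := -A⁻¹)
              (by rw [neg_le_neg_iff] at *; simpa using hAinv) ht
            rw [← sub_eq_add_neg] at this
            calc 1 - t/A = 1 + t * (-A⁻¹) := by field_simp; ring
              _ ≤ _ := this
          have hmono : (1 - A⁻¹ : ℝ) ^ t ≤ (1 - k⁻¹) ^ t := by
            apply Real.rpow_le_rpow (by linarith) _ ht0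
            have : k⁻¹ ≤ A⁻¹ := inv_anti₀ hA0 hkA
            linarith
          calc (1 - t/A) * k⁻¹ ≤ (1 - k⁻¹) ^ t * k⁻¹ :=
                mul_le_mul_of_nonneg_right (le_trans hbern hmono) (inv_nonneg.2 hk0.le)
            _ = zf t k := by rw [zf, h1]; ring
  linarith


lemma hlogN : Tendsto (fun d : ℕ => Real.log d) atTop atTop :=
  Real.tendsto_log_atTop.comp tendsto_natCast_atTop_atTop

lemma tendsto_fup (τ : ℝ) :
    Tendsto (fun d : ℕ => (Real.log d / d + ((1-τ) * Real.log d + Real.log (Real.log d))) / Real.log d)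
      atTop (nhds (1 - τ)) := by
  have h1 : Tendsto (fun d : ℕ => 1 / (d:ℝ) + ((1-τ) + Real.log (Real.log d) / Real.log d))
      atTop (nhds (0 + ((1-τ) + 0))) :=
    (tendsto_one_div_atTop_nhds_zero_nat).add (tendsto_const_nhds.add loglog_div_log)
  rw [show (0:ℝ) + ((1-τ) + 0) = 1 - τ by ring] at h1
  refine Tendsto.congr' ?_ h1
  filter_upwards [hlogN.eventually_gt_atTop 0, eventually_gt_atTop 0] with d hL hd
  have hx : (0:ℝ) < d := by exact_mod_cast hd
  field_simp

lemma tendsto_flo (τ : ℝ) :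
    Tendsto (fun d : ℕ =>
        (1 - 1 / (Real.log d * Real.log d)) * ((1-τ) * Real.log d - 2 * Real.log (Real.log d)) / (1 + Real.log d))
      atTop (nhds (1 - τ)) := by
  have h2 : Tendsto (fun d : ℕ => 1 / (Real.log d * Real.log d)) atTop (nhds 0) := by
    have h := (hlogN.atTop_mul_atTop₀ hlogN).inv_tendsto_atTop
    refine h.congr fun d => ?_
    simp [one_div]
  have h3 : Tendsto (fun d : ℕ => 1 / (1 + Real.log d)) atTop (nhds 0) := by
    have h := (tendsto_atTop_add_const_left atTop 1 hlogN).inv_tendsto_atTop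
    refine h.congr fun d => ?_
    simp [one_div]
  have h1 : Tendsto (fun d : ℕ =>
      (1 - 1 / (Real.log d * Real.log d)) * (((1-τ) - 2 * (Real.log (Real.log d) / Real.log d)) * (1 - 1 / (1 + Real.log d))))
      atTop (nhds ((1 - 0) * (((1-τ) - 2 * 0) * (1 - 0)))) :=
    (tendsto_const_nhds.sub h2).mul
      (((tendsto_const_nhds.sub (loglog_div_log.const_mul 2)).mul (tendsto_const_nhds.sub h3)))
  rw [show ((1:ℝ) - 0) * (((1-τ) - 2 * 0) * (1 - 0)) = 1 - τ by ring] at h1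
  refine Tendsto.congr' ?_ h1
  filter_upwards [hlogN.eventually_gt_atTop 0] with d hL
  have h1L : (0:ℝ) < 1 + Real.log d := by linarith
  field_simp
  ring

lemma key (τ : ℝ) (hτ0 : 0 < τ) (hτ1 : τ < 1) (d : ℕ) (hd3 : 3 ≤ d)
    (hq1 : Real.log (Real.log d) / Real.log d < τ/2)
    (hq2 : Real.log (Real.log d) / Real.log d < (1-τ)/4)
    (hL1 : 1 < Real.log d) :
    (1 - 1 / (Real.log d * Real.log d)) * ((1-τ) * Real.log d - 2 * Real.log (Real.log d)) / (1 + Real.log d) ≤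
      (∫ k in (1 : ℝ)..(d : ℝ), k ^ (-1 : ℝ) * (1 - k ^ (-1 : ℝ)) ^ ((d : ℝ) ^ τ)) /
        (∑ k ∈ Finset.Icc 1 d, (k : ℝ) ^ (-1 : ℝ)) ∧
    (∫ k in (1 : ℝ)..(d : ℝ), k ^ (-1 : ℝ) * (1 - k ^ (-1 : ℝ)) ^ ((d : ℝ) ^ τ)) /
        (∑ k ∈ Finset.Icc 1 d, (k : ℝ) ^ (-1 : ℝ)) ≤
      (Real.log d / d + ((1-τ) * Real.log d + Real.log (Real.log d))) / Real.log d := by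
  set x : ℝ := (d : ℝ) with hxdef
  set L : ℝ := Real.log x with hLdef
  have hx3 : (3:ℝ) ≤ x := by rw [hxdef]; exact_mod_cast hd3
  have hx0 : (0:ℝ) < x := by linarith
  have hx1 : (1:ℝ) ≤ x := by linarith
  have hL0 : (0:ℝ) < L := by linarith
  have hτL0 : 0 ≤ τ * L := mul_nonneg hτ0.le hL0.le
  have hτL1 : 0 ≤ L - τ * L := by
    have : 0 ≤ (1 - τ) * L := mul_nonneg (by linarith) hL0.le
    linarith
  have hLτ : Real.log L ≤ τ/2 * L := by
    have := (div_lt_iff₀ hL0).mp hq1; linarith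
  have hLτ' : Real.log L ≤ (1-τ)/4 * L := by
    have := (div_lt_iff₀ hL0).mp hq2; linarith
  set t : ℝ := x ^ τ with htdef
  have hteq : t = Real.exp (τ * L) := by
    rw [htdef, Real.rpow_def_of_pos hx0, mul_comm]
  have hlogt : Real.log t = τ * L := by rw [htdef, Real.log_rpow hx0]
  have ht1 : (1:ℝ) ≤ t := by
    rw [hteq]; exact Real.one_le_exp hτL0
  have ht0' : t ≠ 0 := ne_of_gt (lt_of_lt_of_le one_pos ht1)
  have htx : t ≤ x := by
    calc t = x ^ τ := htdef
      _ ≤ x ^ (1:ℝ) := Real.rpow_le_rpow_of_exponent_le hx1 (le_of_lt hτ1)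
      _ = x := Real.rpow_one x
  set B : ℝ := t / L with hBdef
  have hLt : L ≤ t := by
    calc L = Real.exp (Real.log L) := (Real.exp_log hL0).symm
      _ ≤ Real.exp (τ * L) := Real.exp_le_exp.2 (by linarith)
      _ = t := hteq.symm
  have hB1 : (1:ℝ) ≤ B := (one_le_div hL0).2 hLt
  have hBx : B ≤ x := le_trans (div_le_self (by linarith) hL1.le) htx
  have hLL0 : (0:ℝ) < L * L := mul_pos hL0 hL0
  have hLL1 : (1:ℝ) ≤ L * L := by nlinarith [hL1]
  set A : ℝ := t * (L * L) with hAdef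
  have hA1 : (1:ℝ) ≤ A := by
    rw [hAdef]
    exact le_trans hLL1 (le_mul_of_one_le_left hLL0.le ht1)
  have hAx : A ≤ x := by
    have hLL : L * L = Real.exp (Real.log L + Real.log L) := by
      rw [Real.exp_add, Real.exp_log hL0]
    calc A = Real.exp (τ * L + (Real.log L + Real.log L)) := by
          rw [hAdef, hLL, hteq, ← Real.exp_add]
      _ ≤ Real.exp L := Real.exp_le_exp.2 (by linarith)
      _ = x := Real.exp_log hx0
  have hlogB : Real.log B = τ * L - Real.log L := by
    rw [hBdef, Real.log_div ht0' (ne_of_gt hL0), hlogt]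
  have hlogA : Real.log A = τ * L + (Real.log L + Real.log L) := by
    rw [hAdef, Real.log_mul ht0' (ne_of_gt hLL0),
      Real.log_mul (ne_of_gt hL0) (ne_of_gt hL0), hlogt]
  have hIeq : (∫ k in (1:ℝ)..x, k ^ (-1 : ℝ) * (1 - k ^ (-1 : ℝ)) ^ t) =
      ∫ k in (1:ℝ)..x, zf t k := rfl
  rw [hIeq]
  set I : ℝ := ∫ k in (1:ℝ)..x, zf t k with hIdef
  have hI0 : 0 ≤ I := integral_nonneg hx1 fun k hk => zf_nonneg t hk.1
  set H : ℝ := ∑ k ∈ Finset.Icc 1 d, (k : ℝ) ^ (-1 : ℝ) with hHdef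
  obtain ⟨hH1, hH2⟩ := harmonic_bounds d (by omega)
  rw [← hLdef, ← hHdef] at hH1 hH2
  have hH0 : 0 < H := lt_of_lt_of_le hL0 hH1
  have hlogL0 : 0 < Real.log L := Real.log_pos hL1
  constructor
  · -- lower bound
    have hlow : (1 - 1/(L*L)) * ((1-τ) * L - 2 * Real.log L) ≤ I := by
      have h := zf_lower x A t hA1 hAx ht1
      have h1 : t / A = 1 / (L * L) := by
        rw [hAdef, div_mul_cancel_left₀ ht0', one_div]
      have h2 : Real.log x - Real.log A = (1-τ) * L - 2 * Real.log L := by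
        rw [hlogA, ← hLdef]; ring
      rw [h1, h2] at h; exact h
    have e1 : 1/(L*L) ≤ 1 := by
      rw [div_le_one hLL0]; exact hLL1
    have e2 : 2 * Real.log L ≤ (1-τ) * L := by linarith
    have hlo0 : 0 ≤ (1 - 1/(L*L)) * ((1-τ) * L - 2 * Real.log L) :=
      mul_nonneg (by linarith) (by linarith)
    calc (1 - 1/(L*L)) * ((1-τ) * L - 2 * Real.log L) / (1 + L)
        ≤ (1 - 1/(L*L)) * ((1-τ) * L - 2 * Real.log L) / H :=
          div_le_div_of_nonneg_left hlo0 hH0 hH2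
      _ ≤ I / H := by gcongr
  · -- upper bound
    have hup : I ≤ L / x + ((1-τ) * L + Real.log L) := by
      have h := zf_upper x B t hB1 hBx (by linarith)
      have h1 : Real.exp (-(t/B)) = x⁻¹ := by
        rw [hBdef, div_div_cancel₀ ht0', Real.exp_neg, Real.exp_log hx0]
      have h2 : Real.log B ≤ L := Real.log_le_log (by linarith) hBx
      have hlogB0 : 0 ≤ Real.log B := by rw [hlogB]; linarith
      have h3 : x⁻¹ * Real.log B ≤ L / x := by
        rw [div_eq_inv_mul]
        exact mul_le_mul_of_nonneg_left h2 (by positivity)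
      rw [h1] at h
      have h4 : Real.log x - Real.log B = (1-τ) * L + Real.log L := by
        rw [hlogB, ← hLdef]; ring
      rw [h4] at h
      linarith
    calc I / H ≤ I / L := div_le_div_of_nonneg_left hI0 hL0 hH1
      _ ≤ (L / x + ((1-τ) * L + Real.log L)) / L := by gcongr

theorem stmt5 (τ : ℝ) (hτ0 : 0 < τ) (hτ1 : τ < 1) :
    Tendsto
      (fun d : ℕ =>
        (∫ k in (1 : ℝ)..(d : ℝ), k ^ (-1 : ℝ) * (1 - k ^ (-1 : ℝ)) ^ ((d : ℝ) ^ τ)) /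
        (∑ k ∈ Finset.Icc 1 d, (k : ℝ) ^ (-1 : ℝ)))
      atTop (nhds (1 - τ)) := by
  refine tendsto_of_tendsto_of_tendsto_of_le_of_le' (tendsto_flo τ) (tendsto_fup τ) ?_ ?_
  · filter_upwards [eventually_ge_atTop 3,
      loglog_div_log.eventually_lt_const (show (0:ℝ) < τ/2 by linarith),
      loglog_div_log.eventually_lt_const (show (0:ℝ) < (1-τ)/4 by linarith),
      hlogN.eventually_gt_atTop 1] with d hd3 hq1 hq2 hL1
    exact (key τ hτ0 hτ1 d hd3 hq1 hq2 hL1).1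
  · filter_upwards [eventually_ge_atTop 3,
      loglog_div_log.eventually_lt_const (show (0:ℝ) < τ/2 by linarith),
      loglog_div_log.eventually_lt_const (show (0:ℝ) < (1-τ)/4 by linarith),
      hlogN.eventually_gt_atTop 1] with d hd3 hq1 hq2 hL1
    exact (key τ hτ0 hτ1 d hd3 hq1 hq2 hL1).2
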